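/- If t and s are in NF_B, then for every A ⊆ Act there exists r ∈ NF_B such that ⊢ t ∥_A s = r is derivable in AX_CLL. -/
import Mathlib


open Classical

/-- Visible actions plus the invisible action τ. -/
inductive ActT (Act : Type) : Type where
  | act : Act → ActT Act
  | tau : ActT Act

/-- Processes of the recursion-free calculus CLL. -/
inductive Proc (Act : Type) : Type where
  | nil  : Proc Act                                -- 0
  | bot  : Proc Act                                -- ⊥
  | pre  : ActT Act → Proc Act → Proc Act          -- α.t
  | ec   : Proc Act → Proc Act → Proc Act          -- t □ t
  | conj : Proc Act → Proc Act → Proc Act          -- t ∧ t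
  | disj : Proc Act → Proc Act → Proc Act          -- t ∨ t
  | par  : Set Act → Proc Act → Proc Act → Proc Act -- t ∥_A t

namespace Proc

variable {Act : Type}

/-- Whether a process has a τ-transition (structural stratification used for
the negative premises of the SOS rules). -/
def hasTau : Proc Act → Prop
  | nil => False
  | bot => False
  | pre a _ => a = ActT.tau
  | ec t₁ t₂ => hasTau t₁ ∨ hasTau t₂
  | conj t₁ t₂ => hasTau t₁ ∨ hasTau t₂
  | disj _ _ => True
  | par _ t₁ t₂ => hasTau t₁ ∨ hasTau t₂

/-- The transition relation, given by the SOS rules of CLL_R. -/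
inductive Trans : Proc Act → ActT Act → Proc Act → Prop where
  | pre : Trans (pre α t) α t
  | ecL : Trans t₁ (ActT.act a) t₁' → ¬ hasTau t₂ →
      Trans (ec t₁ t₂) (ActT.act a) t₁'
  | ecR : ¬ hasTau t₁ → Trans t₂ (ActT.act a) t₂' →
      Trans (ec t₁ t₂) (ActT.act a) t₂'
  | ecTauL : Trans t₁ ActT.tau t₁' → Trans (ec t₁ t₂) ActT.tau (ec t₁' t₂)
  | ecTauR : Trans t₂ ActT.tau t₂' → Trans (ec t₁ t₂) ActT.tau (ec t₁ t₂')
  | conjAct : Trans t₁ (ActT.act a) t₁' → Trans t₂ (ActT.act a) t₂' →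
      Trans (conj t₁ t₂) (ActT.act a) (conj t₁' t₂')
  | conjTauL : Trans t₁ ActT.tau t₁' → Trans (conj t₁ t₂) ActT.tau (conj t₁' t₂)
  | conjTauR : Trans t₂ ActT.tau t₂' → Trans (conj t₁ t₂) ActT.tau (conj t₁ t₂')
  | disjL : Trans (disj t₁ t₂) ActT.tau t₁
  | disjR : Trans (disj t₁ t₂) ActT.tau t₂
  | parTauL : Trans t₁ ActT.tau t₁' → Trans (par A t₁ t₂) ActT.tau (par A t₁' t₂)
  | parTauR : Trans t₂ ActT.tau t₂' → Trans (par A t₁ t₂) ActT.tau (par A t₁ t₂')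
  | parL : a ∉ A → Trans t₁ (ActT.act a) t₁' → ¬ hasTau t₂ →
      Trans (par A t₁ t₂) (ActT.act a) (par A t₁' t₂)
  | parR : a ∉ A → ¬ hasTau t₁ → Trans t₂ (ActT.act a) t₂' →
      Trans (par A t₁ t₂) (ActT.act a) (par A t₁ t₂')
  | parSync : a ∈ A → Trans t₁ (ActT.act a) t₁' → Trans t₂ (ActT.act a) t₂' →
      Trans (par A t₁ t₂) (ActT.act a) (par A t₁' t₂')

/-- The ready set I(p). -/
def ready (p : Proc Act) : Set (ActT Act) := {α | ∃ q, Trans p α q}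

/-- p is stable if it has no τ-transition. -/
def Stable (p : Proc Act) : Prop := ∀ q, ¬ Trans p ActT.tau q

/-- The inconsistency predicate F, as the least predicate closed under the
predicative rules of CLL_R. -/
inductive Fp : Proc Act → Prop where
  | bot : Fp bot
  | pre : Fp t → Fp (pre α t)
  | disj : Fp t₁ → Fp t₂ → Fp (disj t₁ t₂)
  | ecL : Fp t₁ → Fp (ec t₁ t₂)
  | ecR : Fp t₂ → Fp (ec t₁ t₂)
  | parL : Fp t₁ → Fp (par A t₁ t₂)
  | parR : Fp t₂ → Fp (par A t₁ t₂)
  | conjL : Fp t₁ → Fp (conj t₁ t₂)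
  | conjR : Fp t₂ → Fp (conj t₁ t₂)
  | conjReady : Stable (conj t₁ t₂) → ready t₁ ≠ ready t₂ → Fp (conj t₁ t₂)
  | conjSucc : Trans (conj t₁ t₂) α s → (∀ y, Trans (conj t₁ t₂) α y → Fp y) →
      Fp (conj t₁ t₂)
  | conjStable :
      (∀ y, Relation.ReflTransGen (fun x z => Trans x ActT.tau z) (conj t₁ t₂) y →
        Stable y → Fp y) →
      Fp (conj t₁ t₂)

/-- One τ-step with both endpoints consistent. -/
def tauStepF (p q : Proc Act) : Prop := Trans p ActT.tau q ∧ ¬ Fp p ∧ ¬ Fp q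

/-- p ⇒_F| q : a sequence of τ-transitions from p to q, all states outside F,
with q stable. -/
def epsF (p q : Proc Act) : Prop :=
  Relation.ReflTransGen tauStepF p q ∧ ¬ Fp p ∧ ¬ Fp q ∧ Stable q

/-- p =a⇒_F| q. -/
def wkF (a : Act) (p q : Proc Act) : Prop :=
  ∃ r s, Relation.ReflTransGen tauStepF p r ∧ ¬ Fp p ∧ ¬ Fp r ∧
    Trans r (ActT.act a) s ∧ ¬ Fp s ∧
    Relation.ReflTransGen tauStepF s q ∧ ¬ Fp q ∧ Stable q

/-- R is a stable ready simulation. -/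
def StableRS (R : Proc Act → Proc Act → Prop) : Prop :=
  ∀ p q, R p q →
    Stable p ∧ Stable q ∧
    (¬ Fp p → ¬ Fp q) ∧
    (∀ a p', wkF a p p' → ∃ q', wkF a q q' ∧ R p' q') ∧
    (¬ Fp p → ready p = ready q)

/-- p ⊏̃_RS q. -/
def rsLT (p q : Proc Act) : Prop := ∃ R, StableRS R ∧ R p q

/-- p ⊑_RS q. -/
def rsLE (p q : Proc Act) : Prop :=
  ∀ p', epsF p p' → ∃ q', epsF q q' ∧ rsLT p' q'

/-- p =_RS q. -/
def rsEq (p q : Proc Act) : Prop := rsLE p q ∧ rsLE q p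

/-- Basic process terms T(Σ_B): no ⊥ and no ∧. -/
inductive Basic : Proc Act → Prop where
  | nil : Basic nil
  | pre : Basic t → Basic (pre α t)
  | disj : Basic t₁ → Basic t₂ → Basic (disj t₁ t₂)
  | ec : Basic t₁ → Basic t₂ → Basic (ec t₁ t₂)
  | par : Basic t₁ → Basic t₂ → Basic (par A t₁ t₂)

/-- General external choice □ over a finite sequence (left-nested). -/
def ecList : List (Proc Act) → Proc Act
  | [] => nil
  | t :: ts => ts.foldl ec t

/-- General disjunction ⋁ over a nonempty finite sequence (left-nested). -/
def djList : List (Proc Act) → Proc Act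
  | [] => bot
  | t :: ts => ts.foldl disj t

/-- □_{i<n} a_i.t_i for a sequence of prefixed terms. -/
def ecPre (l : List (Act × Proc Act)) : Proc Act :=
  ecList (l.map fun x => pre (ActT.act x.1) x.2)

/-- The expansion term E = ((□Ω₁) □ (□Ω₂)) □ (□Ω₃). -/
noncomputable def expTerm (A : Set Act) (l₁ l₂ : List (Act × Proc Act)) : Proc Act :=
  ec (ec
      (ecList ((l₁.filter fun x => decide (x.1 ∉ A)).map
        fun x => pre (ActT.act x.1) (par A x.2 (ecPre l₂))))
      (ecList ((l₂.filter fun x => decide (x.1 ∉ A)).map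
        fun x => pre (ActT.act x.1) (par A (ecPre l₁) x.2))))
    (ecList (l₁.flatMap fun x =>
      (l₂.filter fun y => decide (y.1 = x.1 ∧ x.1 ∈ A)).map
        fun y => pre (ActT.act x.1) (par A x.2 y.2)))

/-- Normal forms NF_B. -/
inductive NFB : Proc Act → Prop where
  | mk (ls : List (List (Act × Proc Act))) (hne : ls ≠ [])
      (hnodup : ∀ l ∈ ls, (l.map Prod.fst).Nodup)
      (hsub : ∀ l ∈ ls, ∀ x ∈ l, NFB x.2) :
      NFB (djList (ls.map ecPre))

/-- NF = NF_B ∪ {⊥}. -/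
def NF (p : Proc Act) : Prop := NFB p ∨ p = bot

/-- Derivability ⊢ t ≤ t' in the proof system AX_CLL. -/
inductive Deriv : Proc Act → Proc Act → Prop where
  | refl (t) : Deriv t t
  | trans : Deriv t t' → Deriv t' t'' → Deriv t t''
  | mono_pre : Deriv t t' → Deriv (pre α t) (pre α t')
  | mono_ec : Deriv s s' → Deriv t t' → Deriv (ec s t) (ec s' t')
  | mono_conj : Deriv s s' → Deriv t t' → Deriv (conj s t) (conj s' t')
  | mono_disj : Deriv s s' → Deriv t t' → Deriv (disj s t) (disj s' t')
  | mono_par : Deriv s s' → Deriv t t' → Deriv (par A s t) (par A s' t')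
  -- external choice
  | ec_comm : Deriv (ec x y) (ec y x)
  | ec_assoc₁ : Deriv (ec (ec x y) z) (ec x (ec y z))
  | ec_assoc₂ : Deriv (ec x (ec y z)) (ec (ec x y) z)
  | ec_idem₁ : Deriv (ec x x) x
  | ec_idem₂ : Deriv x (ec x x)
  | ec_nil₁ : Deriv (ec x nil) x
  | ec_nil₂ : Deriv x (ec x nil)
  | ec_bot₁ : Deriv (ec x bot) bot
  | ec_bot₂ : Deriv bot (ec x bot)
  -- disjunction
  | disj_comm : Deriv (disj x y) (disj y x)
  | disj_assoc₁ : Deriv (disj x (disj y z)) (disj (disj x y) z)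
  | disj_assoc₂ : Deriv (disj (disj x y) z) (disj x (disj y z))
  | disj_idem₁ : Deriv (disj x x) x
  | disj_idem₂ : Deriv x (disj x x)
  | disj_bot₁ : Deriv (disj x bot) x
  | disj_bot₂ : Deriv x (disj x bot)
  | disj_le : Deriv x (disj x y)
  -- conjunction
  | conj_comm : Deriv (conj x y) (conj y x)
  | conj_idem₁ : Deriv (conj x x) x
  | conj_idem₂ : Deriv x (conj x x)
  | conj_bot₁ : Deriv (conj x bot) bot
  | conj_bot₂ : Deriv bot (conj x bot)
  -- prefixing
  | pre_bot₁ : Deriv (pre (ActT.act a) bot) bot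
  | pre_bot₂ : Deriv bot (pre (ActT.act a) bot)
  | tau_pre₁ : Deriv (pre ActT.tau x) x
  | tau_pre₂ : Deriv x (pre ActT.tau x)
  -- parallel
  | par_comm : Deriv (par A x y) (par A y x)
  | par_bot₁ : Deriv (par A x bot) bot
  | par_bot₂ : Deriv bot (par A x bot)
  -- distribution over disjunction
  | ds_ec : Deriv (ec x (disj y z)) (disj (ec x y) (ec x z))
  | ds_conj : Deriv (conj x (disj y z)) (disj (conj x y) (conj x z))
  | ds_par : Deriv (par A x (disj y z)) (disj (par A x y) (par A x z))
  | ds_pre : Basic x → Basic y →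
      Deriv (pre (ActT.act a) (disj x y)) (ec (pre (ActT.act a) x) (pre (ActT.act a) y))
  -- external choice and conjunction
  | ecc1₁ (l₁ l₂ : List (Act × Proc Act)) :
      {a | a ∈ l₁.map Prod.fst} ≠ {a | a ∈ l₂.map Prod.fst} →
      Deriv (conj (ecPre l₁) (ecPre l₂)) bot
  | ecc1₂ (l₁ l₂ : List (Act × Proc Act)) :
      {a | a ∈ l₁.map Prod.fst} ≠ {a | a ∈ l₂.map Prod.fst} →
      Deriv bot (conj (ecPre l₁) (ecPre l₂))
  | ecc2 (l : List (Act × Proc Act × Proc Act)) :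
      Deriv (ecPre (l.map fun x => (x.1, conj x.2.1 x.2.2)))
            (conj (ecPre (l.map fun x => (x.1, x.2.1)))
                  (ecPre (l.map fun x => (x.1, x.2.2))))
  | ecc3 (l : List (Act × Proc Act × Proc Act)) :
      (l.map Prod.fst).Nodup →
      Deriv (conj (ecPre (l.map fun x => (x.1, x.2.1)))
                  (ecPre (l.map fun x => (x.1, x.2.2))))
            (ecPre (l.map fun x => (x.1, conj x.2.1 x.2.2)))
  -- expansion
  | exp1 (A : Set Act) (l₁ l₂ : List (Act × Proc Act)) :
      Deriv (par A (ecPre l₁) (ecPre l₂)) (expTerm A l₁ l₂)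
  | exp2 (A : Set Act) (l₁ l₂ : List (Act × Proc Act)) :
      (∀ x ∈ l₁, Basic x.2) → (∀ x ∈ l₂, Basic x.2) →
      Deriv (expTerm A l₁ l₂) (par A (ecPre l₁) (ecPre l₂))

end Proc

namespace Proc

variable {Act : Type}

/-- Derivable equality. -/
def DEq (p q : Proc Act) : Prop := Deriv p q ∧ Deriv q p

namespace DEq

protected theorem rfl {p : Proc Act} : DEq p p := ⟨Deriv.refl p, Deriv.refl p⟩
protected theorem symm {p q : Proc Act} (h : DEq p q) : DEq q p := ⟨h.2, h.1⟩
protected theorem trans {p q r : Proc Act} (h : DEq p q) (h' : DEq q r) : DEq p r :=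
  ⟨h.1.trans h'.1, h'.2.trans h.2⟩
theorem precongr {α : ActT Act} {p q : Proc Act} (h : DEq p q) :
    DEq (pre α p) (pre α q) := ⟨Deriv.mono_pre h.1, Deriv.mono_pre h.2⟩
theorem eccongr {p p' q q' : Proc Act} (h : DEq p p') (h' : DEq q q') :
    DEq (ec p q) (ec p' q') := ⟨Deriv.mono_ec h.1 h'.1, Deriv.mono_ec h.2 h'.2⟩
theorem djcongr {p p' q q' : Proc Act} (h : DEq p p') (h' : DEq q q') :
    DEq (disj p q) (disj p' q') := ⟨Deriv.mono_disj h.1 h'.1, Deriv.mono_disj h.2 h'.2⟩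
theorem parcongr {A : Set Act} {p p' q q' : Proc Act} (h : DEq p p') (h' : DEq q q') :
    DEq (par A p q) (par A p' q') := ⟨Deriv.mono_par h.1 h'.1, Deriv.mono_par h.2 h'.2⟩

end DEq

theorem deq_ec_comm {p q : Proc Act} : DEq (ec p q) (ec q p) := ⟨Deriv.ec_comm, Deriv.ec_comm⟩
theorem deq_ec_assoc {p q r : Proc Act} : DEq (ec (ec p q) r) (ec p (ec q r)) :=
  ⟨Deriv.ec_assoc₁, Deriv.ec_assoc₂⟩
theorem deq_disj_comm {p q : Proc Act} : DEq (disj p q) (disj q p) :=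
  ⟨Deriv.disj_comm, Deriv.disj_comm⟩
theorem deq_disj_assoc {p q r : Proc Act} : DEq (disj (disj p q) r) (disj p (disj q r)) :=
  ⟨Deriv.disj_assoc₂, Deriv.disj_assoc₁⟩
theorem deq_par_comm {A : Set Act} {p q : Proc Act} : DEq (par A p q) (par A q p) :=
  ⟨Deriv.par_comm, Deriv.par_comm⟩

theorem foldl_ec_congr : ∀ (l : List (Proc Act)) {a b : Proc Act}, DEq a b →
    DEq (l.foldl ec a) (l.foldl ec b)
  | [], _, _, h => h
  | _ :: l, _, _, h => foldl_ec_congr l (h.eccongr DEq.rfl)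

theorem foldl_ec_assoc : ∀ (l : List (Proc Act)) (z w : Proc Act),
    DEq (l.foldl ec (ec z w)) (ec z (l.foldl ec w))
  | [], _, _ => DEq.rfl
  | x :: l, z, w =>
    (foldl_ec_congr l deq_ec_assoc).trans (foldl_ec_assoc l z (ec w x))

theorem foldl_disj_congr : ∀ (l : List (Proc Act)) {a b : Proc Act}, DEq a b →
    DEq (l.foldl disj a) (l.foldl disj b)
  | [], _, _, h => h
  | _ :: l, _, _, h => foldl_disj_congr l (h.djcongr DEq.rfl)

theorem foldl_disj_assoc : ∀ (l : List (Proc Act)) (z w : Proc Act),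
    DEq (l.foldl disj (disj z w)) (disj z (l.foldl disj w))
  | [], _, _ => DEq.rfl
  | x :: l, z, w =>
    (foldl_disj_congr l deq_disj_assoc).trans (foldl_disj_assoc l z (disj w x))

theorem ecList_cons {x : Proc Act} : ∀ {l : List (Proc Act)},
    DEq (ecList (x :: l)) (ec x (ecList l))
  | [] => ⟨Deriv.ec_nil₂, Deriv.ec_nil₁⟩
  | _ :: _ => foldl_ec_assoc _ _ _

theorem djList_cons {x : Proc Act} : ∀ {l : List (Proc Act)},
    DEq (djList (x :: l)) (disj x (djList l))
  | [] => ⟨Deriv.disj_bot₂, Deriv.disj_bot₁⟩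
  | _ :: _ => foldl_disj_assoc _ _ _

theorem ecList_append : ∀ (l₁ l₂ : List (Proc Act)),
    DEq (ecList (l₁ ++ l₂)) (ec (ecList l₁) (ecList l₂))
  | [], l₂ => (deq_ec_comm.trans ⟨Deriv.ec_nil₁, Deriv.ec_nil₂⟩).symm
  | x :: l₁, l₂ =>
    ecList_cons.trans ((DEq.rfl.eccongr (ecList_append l₁ l₂)).trans
      (deq_ec_assoc.symm.trans (ecList_cons.symm.eccongr DEq.rfl)))

theorem djList_append : ∀ (l₁ l₂ : List (Proc Act)),
    DEq (djList (l₁ ++ l₂)) (disj (djList l₁) (djList l₂))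
  | [], l₂ => (deq_disj_comm.trans ⟨Deriv.disj_bot₁, Deriv.disj_bot₂⟩).symm
  | x :: l₁, l₂ =>
    djList_cons.trans ((DEq.rfl.djcongr (djList_append l₁ l₂)).trans
      (deq_disj_assoc.symm.trans (djList_cons.symm.djcongr DEq.rfl)))

theorem ecList_perm {l l' : List (Proc Act)} (h : l.Perm l') :
    DEq (ecList l) (ecList l') := by
  induction h with
  | nil => exact DEq.rfl
  | cons x _ ih => exact ecList_cons.trans ((DEq.rfl.eccongr ih).trans ecList_cons.symm)
  | swap x y l =>
    refine ecList_cons.trans ((DEq.rfl.eccongr ecList_cons).trans ?_)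
    refine (deq_ec_assoc.symm.trans ((deq_ec_comm.eccongr DEq.rfl).trans deq_ec_assoc)).trans ?_
    exact (DEq.rfl.eccongr ecList_cons.symm).trans ecList_cons.symm
  | trans _ _ ih1 ih2 => exact ih1.trans ih2

theorem deriv_le_disj_left {x y : Proc Act} : Deriv x (disj x y) := Deriv.disj_le
theorem deriv_le_disj_right {x y : Proc Act} : Deriv y (disj x y) :=
  Deriv.trans Deriv.disj_le Deriv.disj_comm
theorem deriv_disj_le {x y z : Proc Act} (h1 : Deriv x z) (h2 : Deriv y z) :
    Deriv (disj x y) z := (Deriv.mono_disj h1 h2).trans Deriv.disj_idem₁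
theorem deriv_ec_le {x y z : Proc Act} (h1 : Deriv x z) (h2 : Deriv y z) :
    Deriv (ec x y) z := (Deriv.mono_ec h1 h2).trans Deriv.ec_idem₁

theorem deq_par_disj {A : Set Act} {x y z : Proc Act} :
    DEq (par A x (disj y z)) (disj (par A x y) (par A x z)) :=
  ⟨Deriv.ds_par,
   deriv_disj_le (Deriv.mono_par (Deriv.refl _) deriv_le_disj_left)
     (Deriv.mono_par (Deriv.refl _) deriv_le_disj_right)⟩

theorem deq_pre_disj {a : Act} {x y : Proc Act} (hx : Basic x) (hy : Basic y) :
    DEq (pre (ActT.act a) (disj x y)) (ec (pre (ActT.act a) x) (pre (ActT.act a) y)) :=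
  ⟨Deriv.ds_pre hx hy,
   deriv_ec_le (Deriv.mono_pre deriv_le_disj_left) (Deriv.mono_pre deriv_le_disj_right)⟩

theorem par_djList {A : Set Act} (x : Proc Act) : ∀ (l : List (Proc Act)),
    DEq (par A x (djList l)) (djList (l.map (par A x)))
  | [] => ⟨Deriv.par_bot₁, Deriv.par_bot₂⟩
  | y :: l =>
    ((DEq.rfl.parcongr djList_cons).trans deq_par_disj).trans
      ((DEq.rfl.djcongr (par_djList x l)).trans djList_cons.symm)

theorem basic_foldl_ec : ∀ (l : List (Proc Act)) {z : Proc Act}, Basic z →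
    (∀ x ∈ l, Basic x) → Basic (l.foldl ec z)
  | [], _, hz, _ => hz
  | x :: l, _, hz, h =>
    basic_foldl_ec l (Basic.ec hz (h x (by simp))) (fun y hy => h y (by simp [hy]))

theorem basic_foldl_disj : ∀ (l : List (Proc Act)) {z : Proc Act}, Basic z →
    (∀ x ∈ l, Basic x) → Basic (l.foldl disj z)
  | [], _, hz, _ => hz
  | x :: l, _, hz, h =>
    basic_foldl_disj l (Basic.disj hz (h x (by simp))) (fun y hy => h y (by simp [hy]))

theorem basic_ecList : ∀ {l : List (Proc Act)}, (∀ x ∈ l, Basic x) → Basic (ecList l)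
  | [], _ => Basic.nil
  | x :: l, h => basic_foldl_ec l (h x (by simp)) (fun y hy => h y (by simp [hy]))

theorem basic_djList : ∀ {l : List (Proc Act)}, l ≠ [] → (∀ x ∈ l, Basic x) →
    Basic (djList l)
  | [], h, _ => absurd rfl h
  | x :: l, _, h => basic_foldl_disj l (h x (by simp)) (fun y hy => h y (by simp [hy]))

theorem basic_ecPre {l : List (Act × Proc Act)} (h : ∀ x ∈ l, Basic x.2) :
    Basic (ecPre l) := by
  refine basic_ecList (fun x hx => ?_)
  obtain ⟨y, hy, rfl⟩ := List.mem_map.mp hx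
  exact Basic.pre (h y hy)

theorem nfb_basic {p : Proc Act} (hp : NFB p) : Basic p := by
  induction hp with
  | mk ls hne hnd hsub ih =>
    refine basic_djList (by simpa using hne) (fun x hx => ?_)
    obtain ⟨l, hl, rfl⟩ := List.mem_map.mp hx
    exact basic_ecPre (fun y hy => ih l hl y hy)

theorem nfb_ecPre {l : List (Act × Proc Act)} (hnd : (l.map Prod.fst).Nodup)
    (h : ∀ x ∈ l, NFB x.2) : NFB (ecPre l) :=
  NFB.mk [l] (by simp) (by simpa)
    (by intro l' hl' x hx
        rw [List.mem_singleton] at hl'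
        subst hl'
        exact h x hx)

theorem nfb_disj {x y : Proc Act} (hx : NFB x) (hy : NFB y) :
    ∃ r, NFB r ∧ DEq (disj x y) r := by
  obtain ⟨ls₁, hne₁, hnd₁, hsub₁⟩ := hx
  obtain ⟨ls₂, hne₂, hnd₂, hsub₂⟩ := hy
  refine ⟨djList ((ls₁ ++ ls₂).map ecPre), ?_, ?_⟩
  · refine NFB.mk _ (by simp [hne₁]) ?_ ?_
    · intro l hl
      rcases List.mem_append.mp hl with h | h
      exacts [hnd₁ l h, hnd₂ l h]
    · intro l hl
      rcases List.mem_append.mp hl with h | h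
      exacts [hsub₁ l h, hsub₂ l h]
  · rw [List.map_append]
    exact (djList_append _ _).symm

theorem djList_nfb_pointwise : ∀ (l : List (Proc Act)), l ≠ [] →
    (∀ x ∈ l, ∃ r, NFB r ∧ DEq x r) → ∃ r, NFB r ∧ DEq (djList l) r
  | [], h, _ => absurd rfl h
  | [x], _, h => h x (by simp)
  | x :: y :: l, _, h => by
    obtain ⟨rx, hrx, hdx⟩ := h x (by simp)
    obtain ⟨rt, hrt, hdt⟩ := djList_nfb_pointwise (y :: l) (by simp)
      (fun z hz => h z (by simp at hz ⊢; tauto))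
    obtain ⟨r, hr, hd⟩ := nfb_disj hrx hrt
    exact ⟨r, hr, djList_cons.trans ((hdx.djcongr hdt).trans hd)⟩

theorem ecPre_cons {x : Act × Proc Act} {L : List (Act × Proc Act)} :
    DEq (ecPre (x :: L)) (ec (pre (ActT.act x.1) x.2) (ecPre L)) := ecList_cons

theorem ecPre_append (L₁ L₂ : List (Act × Proc Act)) :
    DEq (ecPre (L₁ ++ L₂)) (ec (ecPre L₁) (ecPre L₂)) := by
  rw [ecPre, List.map_append]
  exact ecList_append _ _

theorem ecPre_perm {L L' : List (Act × Proc Act)} (h : L.Perm L') :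
    DEq (ecPre L) (ecPre L') := ecList_perm (h.map _)

theorem ecPre_pointwise : ∀ (L : List (Act × Proc Act)),
    (∀ x ∈ L, ∃ r, NFB r ∧ DEq x.2 r) →
    ∃ L', L'.map Prod.fst = L.map Prod.fst ∧ (∀ x ∈ L', NFB x.2) ∧
      DEq (ecPre L) (ecPre L')
  | [], _ => ⟨[], rfl, by simp, DEq.rfl⟩
  | x :: L, h => by
    obtain ⟨r, hr, hd⟩ := h x (by simp)
    obtain ⟨L', hfst, hnfb, hdeq⟩ := ecPre_pointwise L (fun z hz => h z (by simp [hz]))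
    refine ⟨(x.1, r) :: L', by simp [hfst], ?_, ?_⟩
    · intro z hz
      rcases List.mem_cons.mp hz with h1 | h1
      · subst h1; exact hr
      · exact hnfb z h1
    · exact ecPre_cons.trans ((hd.precongr.eccongr hdeq).trans
        (ecPre_cons (x := (x.1, r)) (L := L')).symm)

theorem ecPre_collapse (a : Act) : ∀ (L : List (Act × Proc Act)), L ≠ [] →
    (∀ x ∈ L, x.1 = a) → (∀ x ∈ L, Basic x.2) →
    DEq (ecPre L) (pre (ActT.act a) (djList (L.map Prod.snd)))
  | [], h, _, _ => absurd rfl h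
  | [x], _, ha, _ => by
    have hx : x.1 = a := ha x (by simp)
    rw [show ecPre [x] = pre (ActT.act x.1) x.2 from rfl, hx]
    exact DEq.rfl
  | x :: y :: L, _, ha, hb => by
    have hx : x.1 = a := ha x (by simp)
    have h2 := ecPre_collapse a (y :: L) (by simp)
      (fun z hz => ha z (by simp at hz ⊢; tauto))
      (fun z hz => hb z (by simp at hz ⊢; tauto))
    have hbx : Basic x.2 := hb x (by simp)
    have hbd : Basic (djList ((y :: L).map Prod.snd)) := by
      refine basic_djList (by simp) (fun z hz => ?_)
      obtain ⟨w, hw, rfl⟩ := List.mem_map.mp hz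
      exact hb w (by simp at hw ⊢; tauto)
    refine ecPre_cons.trans ?_
    rw [hx]
    refine ((DEq.rfl.eccongr h2).trans (deq_pre_disj hbx hbd).symm).trans ?_
    exact djList_cons.symm.precongr

theorem sizeOf_mem_foldl_ec : ∀ (l : List (Proc Act)) (z x : Proc Act),
    x = z ∨ x ∈ l → sizeOf x ≤ sizeOf (l.foldl ec z)
  | [], z, x, h => by rcases h with rfl | h; exacts [le_refl _, absurd h (by simp)]
  | y :: l, z, x, h => by
    rcases h with rfl | h
    · refine le_trans ?_ (sizeOf_mem_foldl_ec l (ec x y) (ec x y) (Or.inl rfl))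
      simp only [Proc.ec.sizeOf_spec]; omega
    · rcases List.mem_cons.mp h with rfl | h
      · refine le_trans ?_ (sizeOf_mem_foldl_ec l (ec z x) (ec z x) (Or.inl rfl))
        simp only [Proc.ec.sizeOf_spec]; omega
      · exact sizeOf_mem_foldl_ec l (ec z y) x (Or.inr h)

theorem sizeOf_mem_foldl_disj : ∀ (l : List (Proc Act)) (z x : Proc Act),
    x = z ∨ x ∈ l → sizeOf x ≤ sizeOf (l.foldl disj z)
  | [], z, x, h => by rcases h with rfl | h; exacts [le_refl _, absurd h (by simp)]
  | y :: l, z, x, h => by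
    rcases h with rfl | h
    · refine le_trans ?_ (sizeOf_mem_foldl_disj l (disj x y) (disj x y) (Or.inl rfl))
      simp only [Proc.disj.sizeOf_spec]; omega
    · rcases List.mem_cons.mp h with rfl | h
      · refine le_trans ?_ (sizeOf_mem_foldl_disj l (disj z x) (disj z x) (Or.inl rfl))
        simp only [Proc.disj.sizeOf_spec]; omega
      · exact sizeOf_mem_foldl_disj l (disj z y) x (Or.inr h)

theorem sizeOf_mem_ecList {l : List (Proc Act)} {x : Proc Act} (h : x ∈ l) :
    sizeOf x ≤ sizeOf (ecList l) := by
  cases l with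
  | nil => simp at h
  | cons y l =>
    rcases List.mem_cons.mp h with rfl | h
    · exact sizeOf_mem_foldl_ec l x x (Or.inl rfl)
    · exact sizeOf_mem_foldl_ec l y x (Or.inr h)

theorem sizeOf_mem_djList {l : List (Proc Act)} {x : Proc Act} (h : x ∈ l) :
    sizeOf x ≤ sizeOf (djList l) := by
  cases l with
  | nil => simp at h
  | cons y l =>
    rcases List.mem_cons.mp h with rfl | h
    · exact sizeOf_mem_foldl_disj l x x (Or.inl rfl)
    · exact sizeOf_mem_foldl_disj l y x (Or.inr h)

theorem sizeOf_snd_lt_ecPre {l : List (Act × Proc Act)} {x : Act × Proc Act}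
    (h : x ∈ l) : sizeOf x.2 < sizeOf (ecPre l) := by
  have hm : pre (ActT.act x.1) x.2 ∈ l.map (fun z => pre (ActT.act z.1) z.2) :=
    List.mem_map.mpr ⟨x, h, rfl⟩
  have := sizeOf_mem_ecList (l := l.map (fun z => pre (ActT.act z.1) z.2)) hm
  have h2 : sizeOf x.2 < sizeOf (pre (ActT.act x.1) x.2) := by
    simp only [Proc.pre.sizeOf_spec]; omega
  exact lt_of_lt_of_le h2 this

/-- Merging duplicate prefixes. -/
theorem merge_lemma : ∀ (n : ℕ) (L : List (Act × Proc Act)), L.length ≤ n →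
    (∀ x ∈ L, NFB x.2) →
    ∃ L', (L'.map Prod.fst).Nodup ∧ (∀ x ∈ L', NFB x.2) ∧
      (∀ b ∈ L'.map Prod.fst, b ∈ L.map Prod.fst) ∧ DEq (ecPre L) (ecPre L')
  | _, [], _, _ => ⟨[], by simp, by simp, by simp, DEq.rfl⟩
  | 0, x :: L, h, _ => by simp at h
  | n + 1, x :: L, hlen, h => by
    classical
    set dups := L.filter (fun z => decide (z.1 = x.1)) with hdups
    set rest := L.filter (fun z => !decide (z.1 = x.1)) with hrest
    have hperm : (dups ++ rest).Perm L := List.filter_append_perm _ L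
    have hdmem : ∀ z ∈ dups, z ∈ L ∧ z.1 = x.1 := by
      intro z hz
      have := List.mem_filter.mp hz
      exact ⟨this.1, by simpa using this.2⟩
    have hrmem : ∀ z ∈ rest, z ∈ L ∧ ¬ z.1 = x.1 := by
      intro z hz
      have := List.mem_filter.mp hz
      exact ⟨this.1, by simpa using this.2⟩
    -- collapse the front block
    have hfront : DEq (ecPre (x :: dups))
        (pre (ActT.act x.1) (djList ((x :: dups).map Prod.snd))) := by
      refine ecPre_collapse x.1 (x :: dups) (by simp) ?_ ?_
      · intro z hz
        rcases List.mem_cons.mp hz with rfl | hz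
        · rfl
        · exact (hdmem z hz).2
      · intro z hz
        rcases List.mem_cons.mp hz with rfl | hz
        · exact nfb_basic (h z (by simp))
        · exact nfb_basic (h z (by simp [(hdmem z hz).1]))
    have hdj : ∃ z, NFB z ∧ DEq (djList ((x :: dups).map Prod.snd)) z := by
      refine djList_nfb_pointwise _ (by simp) ?_
      intro p hp
      obtain ⟨w, hw, rfl⟩ := List.mem_map.mp hp
      rcases List.mem_cons.mp hw with rfl | hw
      · exact ⟨w.2, h w (by simp), DEq.rfl⟩
      · exact ⟨w.2, h w (by simp [(hdmem w hw).1]), DEq.rfl⟩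
    obtain ⟨z, hz, hzd⟩ := hdj
    -- recurse on rest
    have hrlen : rest.length ≤ n := by
      have h1 : rest.length ≤ L.length := List.length_filter_le _ _
      simp only [List.length_cons] at hlen
      omega
    obtain ⟨rest', hnd', hnfb', hsubset', hdeq'⟩ := merge_lemma n rest hrlen
      (fun w hw => h w (by simp [(hrmem w hw).1]))
    refine ⟨(x.1, z) :: rest', ?_, ?_, ?_, ?_⟩
    · simp only [List.map_cons, List.nodup_cons]
      refine ⟨?_, hnd'⟩
      intro hmem
      obtain ⟨w, hw, hwf⟩ := List.mem_map.mp hmem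
      have := hsubset' w.1 (List.mem_map.mpr ⟨w, hw, rfl⟩)
      obtain ⟨u, hu, huf⟩ := List.mem_map.mp this
      exact (hrmem u hu).2 (by rw [huf, hwf])
    · intro w hw
      rcases List.mem_cons.mp hw with rfl | hw
      · exact hz
      · exact hnfb' w hw
    · intro b hb
      simp only [List.map_cons, List.mem_cons] at hb ⊢
      rcases hb with rfl | hb
      · exact Or.inl rfl
      · have := hsubset' b hb
        obtain ⟨u, hu, huf⟩ := List.mem_map.mp this
        exact Or.inr (List.mem_map.mpr ⟨u, (hrmem u hu).1, huf⟩)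
    · have step1 : DEq (ecPre (x :: L)) (ecPre ((x :: dups) ++ rest)) := by
        refine ecPre_perm ?_
        have : (x :: (dups ++ rest)).Perm (x :: L) := (hperm.cons x)
        simpa using this.symm
      refine step1.trans ((ecPre_append (x :: dups) rest).trans ?_)
      refine ((hfront.trans hzd.precongr).eccongr hdeq').trans ?_
      exact (ecPre_cons (x := (x.1, z)) (L := rest')).symm

theorem main_aux : ∀ (n : ℕ) (t s : Proc Act), sizeOf t + sizeOf s ≤ n → NFB t → NFB s →
    ∀ A : Set Act, ∃ r, NFB r ∧ DEq (par A t s) r := by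
  intro n
  induction n using Nat.strong_induction_on with
  | _ n IH =>
  intro t s hn ht hs A
  obtain ⟨ls₁, hne₁, hnd₁, hsub₁⟩ := ht
  obtain ⟨ls₂, hne₂, hnd₂, hsub₂⟩ := hs
  have hS_nfb : ∀ l₂ ∈ ls₂, NFB (ecPre l₂) := fun l₂ h2 => nfb_ecPre (hnd₂ _ h2) (hsub₂ _ h2)
  have hT_nfb : ∀ l₁ ∈ ls₁, NFB (ecPre l₁) := fun l₁ h1 => nfb_ecPre (hnd₁ _ h1) (hsub₁ _ h1)
  have hsize₁ : ∀ l₁ ∈ ls₁, sizeOf (ecPre l₁) ≤ sizeOf (djList (ls₁.map ecPre)) :=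
    fun l₁ h1 => sizeOf_mem_djList (List.mem_map.mpr ⟨l₁, h1, rfl⟩)
  have hsize₂ : ∀ l₂ ∈ ls₂, sizeOf (ecPre l₂) ≤ sizeOf (djList (ls₂.map ecPre)) :=
    fun l₂ h2 => sizeOf_mem_djList (List.mem_map.mpr ⟨l₂, h2, rfl⟩)
  have pair : ∀ l₁ ∈ ls₁, ∀ l₂ ∈ ls₂, ∃ r, NFB r ∧ DEq (par A (ecPre l₁) (ecPre l₂)) r := by
    intro l₁ h₁ l₂ h₂
    have hb₁ : ∀ x ∈ l₁, Basic x.2 := fun x hx => nfb_basic (hsub₁ _ h₁ x hx)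
    have hb₂ : ∀ x ∈ l₂, Basic x.2 := fun x hx => nfb_basic (hsub₂ _ h₂ x hx)
    have hexp : DEq (par A (ecPre l₁) (ecPre l₂)) (expTerm A l₁ l₂) :=
      ⟨Deriv.exp1 A l₁ l₂, Deriv.exp2 A l₁ l₂ hb₁ hb₂⟩
    set E₁ := (l₁.filter fun x => decide (x.1 ∉ A)).map
      (fun x => (x.1, par A x.2 (ecPre l₂))) with hE₁
    set E₂ := (l₂.filter fun x => decide (x.1 ∉ A)).map
      (fun x => (x.1, par A (ecPre l₁) x.2)) with hE₂
    set E₃ := l₁.flatMap (fun x => (l₂.filter fun y => decide (y.1 = x.1 ∧ x.1 ∈ A)).map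
      (fun y => (x.1, par A x.2 y.2))) with hE₃
    have hEeq : expTerm A l₁ l₂ = ec (ec (ecPre E₁) (ecPre E₂)) (ecPre E₃) := by
      simp only [expTerm, ecPre, hE₁, hE₂, hE₃, List.map_map, List.map_flatMap,
        Function.comp_def]
    have hE : DEq (expTerm A l₁ l₂) (ecPre (E₁ ++ E₂ ++ E₃)) := by
      rw [hEeq]
      exact ((ecPre_append (E₁ ++ E₂) E₃).trans
        ((ecPre_append E₁ E₂).eccongr DEq.rfl)).symm
    have hpt : ∀ x ∈ E₁ ++ E₂ ++ E₃, ∃ r, NFB r ∧ DEq x.2 r := by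
      intro x hx
      have s3 : sizeOf (ecPre l₁) ≤ sizeOf (djList (ls₁.map ecPre)) := hsize₁ l₁ h₁
      have s4 : sizeOf (ecPre l₂) ≤ sizeOf (djList (ls₂.map ecPre)) := hsize₂ l₂ h₂
      rcases List.mem_append.mp hx with hx' | hx3
      · rcases List.mem_append.mp hx' with hx1 | hx2
        · obtain ⟨z, hz, rfl⟩ := List.mem_map.mp hx1
          have hzl : z ∈ l₁ := (List.mem_filter.mp hz).1
          have s1 : sizeOf z.2 < sizeOf (ecPre l₁) := sizeOf_snd_lt_ecPre hzl
          exact IH (sizeOf z.2 + sizeOf (ecPre l₂)) (by omega) z.2 (ecPre l₂)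
            (le_refl _) (hsub₁ _ h₁ z hzl) (hS_nfb l₂ h₂) A
        · obtain ⟨z, hz, rfl⟩ := List.mem_map.mp hx2
          have hzl : z ∈ l₂ := (List.mem_filter.mp hz).1
          have s1 : sizeOf z.2 < sizeOf (ecPre l₂) := sizeOf_snd_lt_ecPre hzl
          exact IH (sizeOf (ecPre l₁) + sizeOf z.2) (by omega) (ecPre l₁) z.2
            (le_refl _) (hT_nfb l₁ h₁) (hsub₂ _ h₂ z hzl) A
      · obtain ⟨w, hw, hx'⟩ := List.mem_flatMap.mp hx3
        obtain ⟨y, hy, rfl⟩ := List.mem_map.mp hx'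
        have hyl : y ∈ l₂ := (List.mem_filter.mp hy).1
        have s1 : sizeOf w.2 < sizeOf (ecPre l₁) := sizeOf_snd_lt_ecPre hw
        have s2 : sizeOf y.2 < sizeOf (ecPre l₂) := sizeOf_snd_lt_ecPre hyl
        exact IH (sizeOf w.2 + sizeOf y.2) (by omega) w.2 y.2 (le_refl _)
          (hsub₁ _ h₁ w hw) (hsub₂ _ h₂ y hyl) A
    obtain ⟨L', hfst', hnfb', hdeq'⟩ := ecPre_pointwise _ hpt
    obtain ⟨L'', hnd'', hnfb'', _, hdeq''⟩ := merge_lemma L'.length L' (le_refl _) hnfb'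
    exact ⟨ecPre L'', nfb_ecPre hnd'' hnfb'', (hexp.trans hE).trans (hdeq'.trans hdeq'')⟩
  have helem : ∀ p ∈ (ls₁.map ecPre).map (fun q => par A (djList (ls₂.map ecPre)) q),
      ∃ r, NFB r ∧ DEq p r := by
    intro p hp
    obtain ⟨q, hq, rfl⟩ := List.mem_map.mp hp
    obtain ⟨l₁, h₁, rfl⟩ := List.mem_map.mp hq
    have hinner : ∀ u ∈ (ls₂.map ecPre).map (fun v => par A (ecPre l₁) v),
        ∃ r, NFB r ∧ DEq u r := by
      intro u hu
      obtain ⟨v, hv, rfl⟩ := List.mem_map.mp hu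
      obtain ⟨l₂, h₂, rfl⟩ := List.mem_map.mp hv
      exact pair l₁ h₁ l₂ h₂
    obtain ⟨r, hr, hd⟩ := djList_nfb_pointwise _ (by simp [hne₂]) hinner
    exact ⟨r, hr, deq_par_comm.trans ((par_djList (ecPre l₁) (ls₂.map ecPre)).trans hd)⟩
  obtain ⟨r, hr, hd⟩ := djList_nfb_pointwise _ (by simp [hne₁]) helem
  exact ⟨r, hr, deq_par_comm.trans
    ((par_djList (djList (ls₂.map ecPre)) (ls₁.map ecPre)).trans hd)⟩

/-- Parallel compositions of normal forms reduce in AX_CLL to a normal form in NF_B. -/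
theorem stmt16 {Act : Type} (t s : Proc Act) (ht : NFB t) (hs : NFB s) (A : Set Act) :
    ∃ r : Proc Act, NFB r ∧ Deriv (par A t s) r ∧ Deriv r (par A t s) := by
  obtain ⟨r, hr, hd⟩ := main_aux (sizeOf t + sizeOf s) t s (le_refl _) ht hs A
  exact ⟨r, hr, hd.1, hd.2⟩

end Proc
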